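/- Fix q with 0 < q < 1 and let f₁, f_q ∈ L¹([0,2π); ℂ). Then the following are equivalent: (a) for every n ∈ ℤ, both ∫₀^{2π} f₁(t) e^{int} dt + qⁿ ∫₀^{2π} f_q(t) e^{int} dt = 0 and ∫₀^{2π} f₁(t) e^{-int} dt + qⁿ ∫₀^{2π} f_q(t) e^{-int} dt = 0; (b) there exists c ∈ ℂ such that f₁(t) = c·log(q^{-1/2}) for almost every t and f_q(t) = c·log(q^{1/2}) for almost every t. (This says: a measure on the boundary B = B₁ ∪ B_q of the annulus 𝔸 = {q < |z| < 1}, absolutely continuous with L¹ density with respect to arclength, annihilates A(𝔸) ⊕ A(𝔸)* if and only if its density equals c·log|z q^{-1/2}|.) -/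

import Mathlib

noncomputable section

open MeasureTheory Complex

namespace AnnulusToeplitz

/-- Lebesgue measure `dt` on `[0, 2π)`. -/
abbrev μI : Measure ℝ := volume.restrict (Set.Ico 0 (2 * Real.pi))

open Set Filter Topology Submodule

def eN (n : ℤ) (t : ℝ) : ℂ := Complex.exp ((((n : ℝ) * t : ℝ) : ℂ) * Complex.I)

instance : Fact (0 < 2 * Real.pi) := ⟨Real.two_pi_pos⟩

lemma integrable_mul_cont {f : ℝ → ℂ} (hf : Integrable f μI)
    (P : C(AddCircle (2 * Real.pi), ℂ)) :
    Integrable (fun t => P ((t : ℝ) : AddCircle (2 * Real.pi)) * f t) μI := by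
  have hcont : Continuous fun t : ℝ => P ((t : ℝ) : AddCircle (2 * Real.pi)) := by
    exact P.continuous.comp (AddCircle.continuous_mk' _)
  have h := hf.bdd_mul hcont.aestronglyMeasurable
    (Filter.Eventually.of_forall fun t => P.norm_coe_le_norm _)
  exact h

lemma ae_zero_of_moments {f : ℝ → ℂ} (hf : Integrable f μI)
    (h : ∀ n : ℤ, ∫ t, f t * eN n t ∂μI = 0) :
    ∀ᵐ t ∂μI, f t = 0 := by
  haveI : Fact (0 < 2 * Real.pi) := ⟨Real.two_pi_pos⟩
  -- step 1: trig polynomials annihilate f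
  have hspan : ∀ P ∈ Submodule.span ℂ (Set.range (@fourier (2 * Real.pi))),
      ∫ t, P ((t : ℝ) : AddCircle (2 * Real.pi)) * f t ∂μI = 0 := by
    intro P hP
    induction hP using Submodule.span_induction with
    | mem x hx =>
      obtain ⟨n, rfl⟩ := hx
      have he : ∀ t : ℝ, (fourier n) ((t : ℝ) : AddCircle (2 * Real.pi)) = eN n t := by
        intro t
        rw [fourier_coe_apply]
        unfold eN
        congr 1
        push_cast
        rw [div_eq_iff (by simp [Complex.ofReal_ne_zero, Real.pi_ne_zero] :
          (2 * (Real.pi : ℂ)) ≠ 0)]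
        ring
      simp_rw [he]
      simpa [mul_comm] using h n
    | zero => simp
    | add x y hx hy ihx ihy =>
      have : ∀ t : ℝ, (x + y) ((t : ℝ) : AddCircle (2 * Real.pi)) * f t
          = x ((t : ℝ) : AddCircle (2 * Real.pi)) * f t
            + y ((t : ℝ) : AddCircle (2 * Real.pi)) * f t := by
        intro t; simp [add_mul]
      simp_rw [this]
      rw [integral_add (integrable_mul_cont hf x) (integrable_mul_cont hf y), ihx, ihy, add_zero]
    | smul c x hx ihx =>
      have : ∀ t : ℝ, (c • x) ((t : ℝ) : AddCircle (2 * Real.pi)) * f t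
          = c * (x ((t : ℝ) : AddCircle (2 * Real.pi)) * f t) := by
        intro t; simp [mul_assoc]
      simp_rw [this]
      rw [integral_const_mul, ihx, mul_zero]
  -- step 2: all continuous periodic functions annihilate f
  have hcont : ∀ Ψ : C(AddCircle (2 * Real.pi), ℂ),
      ∫ t, Ψ ((t : ℝ) : AddCircle (2 * Real.pi)) * f t ∂μI = 0 := by
    intro Ψ
    have hΨ : Ψ ∈ closure ((Submodule.span ℂ (Set.range (@fourier (2 * Real.pi)))) : Set _) := by
      have htop := span_fourier_closure_eq_top (T := 2 * Real.pi)
      have : Ψ ∈ (Submodule.span ℂ (Set.range (@fourier (2 * Real.pi)))).topologicalClosure := by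
        rw [htop]; trivial
      exact this
    obtain ⟨u, hu_mem, hu_lim⟩ := mem_closure_iff_seq_limit.1 hΨ
    have h0 : ∀ k, ∫ t, (u k) ((t : ℝ) : AddCircle (2 * Real.pi)) * f t ∂μI = 0 :=
      fun k => hspan _ (hu_mem k)
    have hbound : ∀ k, ‖∫ t, Ψ ((t : ℝ) : AddCircle (2 * Real.pi)) * f t ∂μI‖
        ≤ ‖Ψ - u k‖ * ∫ t, ‖f t‖ ∂μI := by
      intro k
      have heq : ∫ t, Ψ ((t : ℝ) : AddCircle (2 * Real.pi)) * f t ∂μI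
          = ∫ t, (Ψ - u k) ((t : ℝ) : AddCircle (2 * Real.pi)) * f t ∂μI := by
        have : ∀ t : ℝ, (Ψ - u k) ((t : ℝ) : AddCircle (2 * Real.pi)) * f t
            = Ψ ((t : ℝ) : AddCircle (2 * Real.pi)) * f t
              - (u k) ((t : ℝ) : AddCircle (2 * Real.pi)) * f t := by
          intro t; simp [sub_mul]
        simp_rw [this]
        rw [integral_sub (integrable_mul_cont hf Ψ) (integrable_mul_cont hf (u k)), h0 k,
          sub_zero]
      rw [heq]
      calc ‖∫ t, (Ψ - u k) ((t : ℝ) : AddCircle (2 * Real.pi)) * f t ∂μI‖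
          ≤ ∫ t, ‖(Ψ - u k) ((t : ℝ) : AddCircle (2 * Real.pi)) * f t‖ ∂μI :=
            norm_integral_le_integral_norm _
        _ ≤ ∫ t, ‖Ψ - u k‖ * ‖f t‖ ∂μI := by
            refine integral_mono_of_nonneg (Filter.Eventually.of_forall fun t => norm_nonneg _)
              (hf.norm.const_mul _) (Filter.Eventually.of_forall fun t => ?_)
            show ‖(Ψ - u k) ((t : ℝ) : AddCircle (2 * Real.pi)) * f t‖ ≤ ‖Ψ - u k‖ * ‖f t‖
            rw [norm_mul]
            exact mul_le_mul_of_nonneg_right ((Ψ - u k).norm_coe_le_norm _) (norm_nonneg _)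
        _ = ‖Ψ - u k‖ * ∫ t, ‖f t‖ ∂μI := integral_const_mul _ _
    have hlim : Tendsto (fun k => ‖Ψ - u k‖ * ∫ t, ‖f t‖ ∂μI) atTop (𝓝 0) := by
      have h1 : Tendsto (fun k => ‖Ψ - u k‖) atTop (𝓝 0) := by
        have := (tendsto_iff_norm_sub_tendsto_zero).1 hu_lim
        simpa [norm_sub_rev] using this
      simpa using h1.mul_const _
    have hle : ‖∫ t, Ψ ((t : ℝ) : AddCircle (2 * Real.pi)) * f t ∂μI‖ ≤ 0 :=
      ge_of_tendsto' hlim hbound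
    simpa using le_antisymm hle (norm_nonneg _)
  -- step 3: test against smooth compactly supported functions in (0, 2π)
  have main := (isOpen_Ioo (a := (0:ℝ)) (b := 2 * Real.pi)).ae_eq_zero_of_integral_contDiff_smul_eq_zero
    (μ := μI) (f := f) (hf.locallyIntegrable.locallyIntegrableOn _) ?_
  · have hIco : ∀ᵐ t ∂μI, t ∈ Set.Ico 0 (2 * Real.pi) := ae_restrict_mem measurableSet_Ico
    have hne : ∀ᵐ t ∂μI, t ≠ 0 := by
      rw [ae_iff]
      have : {t : ℝ | ¬ t ≠ 0} = {0} := by ext t; simp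
      rw [this]
      exact le_antisymm (le_trans (Measure.restrict_le_self _) (by simp)) zero_le
    filter_upwards [main, hIco, hne] with t h1 h2 h3
    exact h1 ⟨lt_of_le_of_ne h2.1 (Ne.symm h3), h2.2⟩
  · intro φ φdiff φsupp φsub
    have h0 : ((φ 0 : ℝ) : ℂ) = ((φ (0 + 2 * Real.pi) : ℝ) : ℂ) := by
      have hz : φ 0 = 0 := by
        apply image_eq_zero_of_notMem_tsupport
        intro hmem
        exact absurd (φsub hmem).1 (lt_irrefl 0)
      have hp : φ (0 + 2 * Real.pi) = 0 := by
        apply image_eq_zero_of_notMem_tsupport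
        intro hmem
        have := (φsub hmem).2
        simp at this
      rw [hz, hp]
    have hcontOn : ContinuousOn (fun t : ℝ => ((φ t : ℝ) : ℂ)) (Set.Icc 0 (0 + 2 * Real.pi)) :=
      (Complex.continuous_ofReal.comp φdiff.continuous).continuousOn
    let Ψ : C(AddCircle (2 * Real.pi), ℂ) :=
      ⟨AddCircle.liftIco (2 * Real.pi) 0 (fun t => ((φ t : ℝ) : ℂ)),
        AddCircle.liftIco_continuous h0 hcontOn⟩
    have hΨ := hcont Ψ
    have : ∫ t, φ t • f t ∂μI = ∫ t, Ψ ((t : ℝ) : AddCircle (2 * Real.pi)) * f t ∂μI := by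
      refine integral_congr_ae ?_
      filter_upwards [ae_restrict_mem measurableSet_Ico] with t ht
      have : Ψ ((t : ℝ) : AddCircle (2 * Real.pi)) = ((φ t : ℝ) : ℂ) := by
        show AddCircle.liftIco (2 * Real.pi) 0 (fun t => ((φ t : ℝ) : ℂ)) ((t : ℝ) : AddCircle (2 * Real.pi)) = _
        exact AddCircle.liftIco_coe_apply (show t ∈ Set.Ico 0 (0 + 2 * Real.pi) by rwa [zero_add])
      rw [this, Complex.real_smul]
    rw [this, hΨ]

lemma eN_eq (n : ℤ) (t : ℝ) : eN n t = Complex.exp (((n : ℂ) * Complex.I) * (t : ℂ)) := by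
  unfold eN; push_cast; ring_nf

lemma norm_eN (n : ℤ) (t : ℝ) : ‖eN n t‖ = 1 := by
  unfold eN
  simpa using Complex.norm_exp_ofReal_mul_I ((n : ℝ) * t)

lemma continuous_eN (n : ℤ) : Continuous (eN n) := by
  unfold eN; fun_prop

lemma integral_eN (n : ℤ) (hn : n ≠ 0) : ∫ t, eN n t ∂μI = 0 := by
  have h1 : μI = volume.restrict (Set.Ioc 0 (2 * Real.pi)) :=
    Measure.restrict_congr_set Ico_ae_eq_Ioc
  have hc : ((n : ℂ) * Complex.I) ≠ 0 :=
    mul_ne_zero (by exact_mod_cast hn) Complex.I_ne_zero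
  simp_rw [eN_eq]
  rw [h1, ← intervalIntegral.integral_of_le Real.two_pi_pos.le,
    integral_exp_mul_complex hc]
  have h2 : Complex.exp ((n : ℂ) * Complex.I * (((2 * Real.pi : ℝ)) : ℂ)) = 1 := by
    have := Complex.exp_int_mul_two_pi_mul_I n
    rw [← this]; push_cast; ring_nf
  rw [h2]
  simp

lemma integral_eN_zero : ∫ t, eN 0 t ∂μI = ((2 * Real.pi : ℝ) : ℂ) := by
  have : ∀ t : ℝ, eN 0 t = 1 := by intro t; unfold eN; simp
  simp_rw [this]
  rw [integral_const]
  simp [Real.volume_Ico, Real.pi_pos.le, ENNReal.toReal_ofReal, Real.two_pi_pos.le,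
    Complex.real_smul]

lemma integrable_mul_eN {f : ℝ → ℂ} (hf : Integrable f μI) (n : ℤ) :
    Integrable (fun t => f t * eN n t) μI := by
  have h := hf.bdd_mul (f := eN n) (continuous_eN n).aestronglyMeasurable
    (Filter.Eventually.of_forall fun t => (norm_eN n t).le)
  exact h.congr (Filter.Eventually.of_forall fun t => mul_comm _ _)


lemma eN_def (n : ℤ) (t : ℝ) :
    Complex.exp ((((n : ℝ) * t : ℝ) : ℂ) * Complex.I) = eN n t := rfl

lemma eN_neg_def (n : ℤ) (t : ℝ) :
    Complex.exp (-((((n : ℝ) * t : ℝ) : ℂ) * Complex.I)) = eN (-n) t := by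
  unfold eN; congr 1; push_cast; ring

lemma integrable_eN (n : ℤ) : Integrable (eN n) μI :=
  ((continuous_eN n).integrableOn_Icc (a := 0) (b := 2 * Real.pi)).mono_set
    Set.Ico_subset_Icc_self

lemma two_pi_ne : ((2 * Real.pi : ℝ) : ℂ) ≠ 0 :=
  Complex.ofReal_ne_zero.mpr Real.two_pi_pos.ne'

/-- an `L¹` density `(f₁, f_q)` on the two boundary circles of the annulus
`{q < |z| < 1}` annihilates `A(𝔸) ⊕ A(𝔸)*` (equivalently, the displayed moment conditions hold
for all `n ∈ ℤ`) iff `f₁ = c·log(q^{-1/2})` and `f_q = c·log(q^{1/2})` a.e. for some `c ∈ ℂ`. -/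
theorem annulus_annihilator_iff (q : ℝ) (hq0 : 0 < q) (hq1 : q < 1)
    (f1 fq : ℝ → ℂ) (hf1 : Integrable f1 μI) (hfq : Integrable fq μI) :
    (∀ n : ℤ,
      (∫ t, f1 t * Complex.exp ((((n : ℝ) * t : ℝ) : ℂ) * Complex.I) ∂μI)
        + (q : ℂ) ^ n * ∫ t, fq t * Complex.exp ((((n : ℝ) * t : ℝ) : ℂ) * Complex.I) ∂μI = 0
      ∧
      (∫ t, f1 t * Complex.exp (-((((n : ℝ) * t : ℝ) : ℂ) * Complex.I)) ∂μI)
        + (q : ℂ) ^ n * ∫ t, fq t * Complex.exp (-((((n : ℝ) * t : ℝ) : ℂ) * Complex.I)) ∂μI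
        = 0)
    ↔ ∃ c : ℂ,
      (∀ᵐ t ∂μI, f1 t = c * ((Real.log (q ^ (-(1 : ℝ) / 2)) : ℝ) : ℂ)) ∧
      (∀ᵐ t ∂μI, fq t = c * ((Real.log (q ^ ((1 : ℝ) / 2)) : ℝ) : ℂ)) := by

  have hL : Real.log (q ^ (-(1 : ℝ) / 2)) = (-(1 : ℝ) / 2) * Real.log q :=
    Real.log_rpow hq0 _
  have hL2 : Real.log (q ^ ((1 : ℝ) / 2)) = ((1 : ℝ) / 2) * Real.log q :=
    Real.log_rpow hq0 _
  have hlogq : Real.log q ≠ 0 := ne_of_lt (Real.log_neg hq0 hq1)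
  have hL0 : Real.log (q ^ (-(1 : ℝ) / 2)) ≠ 0 := by
    rw [hL]; exact mul_ne_zero (by norm_num) hlogq
  have hL2L : ((Real.log (q ^ ((1 : ℝ) / 2)) : ℝ) : ℂ)
      = -((Real.log (q ^ (-(1 : ℝ) / 2)) : ℝ) : ℂ) := by
    rw [hL, hL2]; push_cast; ring
  simp only [eN_def, eN_neg_def]
  constructor
  · intro h
    have hA : ∀ m : ℤ, (∫ t, f1 t * eN m t ∂μI)
        + (q : ℂ) ^ m * ∫ t, fq t * eN m t ∂μI = 0 := fun m => (h m).1
    have hB : ∀ m : ℤ, (∫ t, f1 t * eN m t ∂μI)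
        + (q : ℂ) ^ (-m) * ∫ t, fq t * eN m t ∂μI = 0 := by
      intro m
      simpa using (h (-m)).2
    have hqm : ∀ m : ℤ, m ≠ 0 → ((q : ℂ) ^ m - (q : ℂ) ^ (-m)) ≠ 0 := by
      intro m hm hcontra
      rw [sub_eq_zero, ← Complex.ofReal_zpow, ← Complex.ofReal_zpow] at hcontra
      have := zpow_right_injective₀ hq0 hq1.ne (Complex.ofReal_injective hcontra)
      omega
    have hfq0 : ∀ m : ℤ, m ≠ 0 → ∫ t, fq t * eN m t ∂μI = 0 := by
      intro m hm
      have hsub : ((q : ℂ) ^ m - (q : ℂ) ^ (-m)) * ∫ t, fq t * eN m t ∂μI = 0 := by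
        linear_combination (hA m) - (hB m)
      exact (mul_eq_zero.1 hsub).resolve_left (hqm m hm)
    have hf10 : ∀ m : ℤ, m ≠ 0 → ∫ t, f1 t * eN m t ∂μI = 0 := by
      intro m hm
      have := hA m
      rw [hfq0 m hm, mul_zero, add_zero] at this
      exact this
    set c1 : ℂ := (∫ t, f1 t * eN 0 t ∂μI) / ((2 * Real.pi : ℝ) : ℂ) with hc1
    set cq : ℂ := (∫ t, fq t * eN 0 t ∂μI) / ((2 * Real.pi : ℝ) : ℂ) with hcq
    have key : ∀ (g : ℝ → ℂ), Integrable g μI →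
        (∀ m : ℤ, m ≠ 0 → ∫ t, g t * eN m t ∂μI = 0) →
        ∀ᵐ t ∂μI, g t = (∫ t, g t * eN 0 t ∂μI) / ((2 * Real.pi : ℝ) : ℂ) := by
      intro g hg hg0
      set d : ℂ := (∫ t, g t * eN 0 t ∂μI) / ((2 * Real.pi : ℝ) : ℂ) with hd
      have := ae_zero_of_moments (f := fun t => g t - d) (hg.sub (integrable_const d)) ?_
      · filter_upwards [this] with t ht
        exact sub_eq_zero.1 ht
      · intro m
        have hint : ∫ t, (g t - d) * eN m t ∂μI
            = (∫ t, g t * eN m t ∂μI) - d * ∫ t, eN m t ∂μI := by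
          have : ∀ t : ℝ, (g t - d) * eN m t = g t * eN m t - d * eN m t := by
            intro t; ring
          simp_rw [this]
          rw [integral_sub (integrable_mul_eN hg m) ((integrable_eN m).const_mul d),
            integral_const_mul]
        rw [hint]
        rcases eq_or_ne m 0 with rfl | hm
        · rw [integral_eN_zero, hd, div_mul_cancel₀ _ two_pi_ne, sub_self]
        · rw [hg0 m hm, integral_eN m hm, mul_zero, sub_zero]
    have hf1ae := key f1 hf1 hf10
    have hfqae := key fq hfq hfq0
    have hA0 := hA 0
    have hsum : c1 * ((2 * Real.pi : ℝ) : ℂ) + cq * ((2 * Real.pi : ℝ) : ℂ) = 0 := by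
      rw [hc1, hcq, div_mul_cancel₀ _ two_pi_ne, div_mul_cancel₀ _ two_pi_ne]
      simpa using hA0
    have hcq1 : cq = -c1 := by
      have h2 : (c1 + cq) * ((2 * Real.pi : ℝ) : ℂ) = 0 := by linear_combination hsum
      have h3 := (mul_eq_zero.1 h2).resolve_right two_pi_ne
      linear_combination h3
    refine ⟨c1 / ((Real.log (q ^ (-(1 : ℝ) / 2)) : ℝ) : ℂ), ?_, ?_⟩
    · filter_upwards [hf1ae] with t ht
      rw [ht, div_mul_cancel₀ _ (Complex.ofReal_ne_zero.mpr hL0)]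
    · filter_upwards [hfqae] with t ht
      rw [ht, ← hcq, hcq1, hL2L, mul_neg,
        div_mul_cancel₀ _ (Complex.ofReal_ne_zero.mpr hL0)]
  · rintro ⟨c, h1, h2⟩ n
    have hint1 : ∀ m : ℤ, ∫ t, f1 t * eN m t ∂μI
        = c * ((Real.log (q ^ (-(1 : ℝ) / 2)) : ℝ) : ℂ) * ∫ t, eN m t ∂μI := by
      intro m
      rw [← integral_const_mul]
      refine integral_congr_ae ?_
      filter_upwards [h1] with t ht
      rw [ht]
    have hint2 : ∀ m : ℤ, ∫ t, fq t * eN m t ∂μI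
        = -(c * ((Real.log (q ^ (-(1 : ℝ) / 2)) : ℝ) : ℂ)) * ∫ t, eN m t ∂μI := by
      intro m
      rw [← integral_const_mul]
      refine integral_congr_ae ?_
      filter_upwards [h2] with t ht
      rw [ht, hL2L]
      ring_nf
    constructor
    · rw [hint1 n, hint2 n]
      rcases eq_or_ne n 0 with rfl | hn
      · simp only [zpow_zero]; ring
      · rw [integral_eN n hn]; ring
    · rw [hint1 (-n), hint2 (-n)]
      rcases eq_or_ne n 0 with rfl | hn
      · simp only [neg_zero, zpow_zero]; ring
      · rw [integral_eN (-n) (neg_ne_zero.mpr hn)]; ring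



end AnnulusToeplitz
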